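/- Let l, n, m, T, q be positive natural numbers and H = T·q. Suppose flow variables satisfy the camera supply constraints, track-node flow conservation, fixed-location flow conservation, and window demand constraints of the dynamic network flow model, with x_{(K_j,H)S} ∈ {0,1} for each track cluster j and x_{(D_j,τ)S} ∈ ℕ for every j, τ. Then the number of track clusters that are interrogated during the horizon, i.e., the cardinality of { j ∈ {1,…,n} : x_{(K_j,H)S} = 1 }, is at most H·l − q·m. -/

import Mathlib

private lemma block_sum (f : ℕ → ℕ) (a T : ℕ) :
    ∑ k ∈ Finset.range T, f (a + T - k) = ∑ t ∈ Finset.Ioc a (a + T), f t := by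
  rw [← Finset.sum_range_reflect,
    show Finset.Ioc a (a + T) = Finset.Ico (a + 1) (a + T + 1) by
      ext x; simp,
    Finset.sum_Ico_eq_sum_range]
  apply Finset.sum_congr
  · congr 1; omega
  · intro j hj
    simp only [Finset.mem_range] at hj
    congr 1; omega

private lemma windows_sum (f : ℕ → ℕ) (T : ℕ) (q : ℕ) :
    ∑ τ ∈ Finset.Icc 1 q, ∑ k ∈ Finset.range T, f (T * τ - k)
      = ∑ t ∈ Finset.Icc 1 (T * q), f t := by
  induction q with
  | zero => simp
  | succ q ih =>
    rw [Finset.sum_Icc_succ_top (by omega : (1:ℕ) ≤ q + 1), ih]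
    have h1 : T * (q + 1) = T * q + T := by ring
    have h2 : ∀ k, T * (q + 1) - k = T * q + T - k := by intro k; omega
    simp only [h2, h1, block_sum f (T * q) T]
    rw [show ∀ x, Finset.Icc 1 x = Finset.Ioc 0 x from fun x => rfl]
    exact Finset.sum_Ioc_consecutive f (by omega) (by omega)

/-- In the dynamic network flow model with `l` cameras, `n` track
clusters, `m` fixed locations, window length `T`, `q` windows and horizon
`H = T * q`, if the flow variables satisfy the camera supply constraints,
track-node conservation, fixed-location conservation and window demand
constraints, with `xKS j ∈ {0,1}` for each track cluster `j`, then the number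
of track clusters interrogated during the horizon, i.e. the cardinality of
`{ j ∈ {1,…,n} : xKS j = 1 }`, is at most `H * l - q * m`. -/
theorem interrogated_clusters_bound
    (l n m T q : ℕ) (hl : 0 < l) (hn : 0 < n) (hm : 0 < m) (hT : 0 < T) (hq : 0 < q)
    (H : ℕ) (hH : H = T * q)
    (xRK : ℕ → ℕ → ℕ → ℕ)  -- camera i, period t, track cluster j
    (xRF : ℕ → ℕ → ℕ → ℕ)  -- camera i, period t, fixed location k
    (xKS : ℕ → ℕ)          -- track cluster j to sink
    (xFD : ℕ → ℕ → ℕ)      -- fixed location j, period t, to D_{j,⌈t/T⌉}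
    (xDS : ℕ → ℕ → ℕ)      -- demand node (j, τ) to sink
    (hKSbin : ∀ j ∈ Finset.Icc 1 n, xKS j ≤ 1)
    (hsupply : ∀ i ∈ Finset.Icc 1 l, ∀ t ∈ Finset.Icc 1 H,
      (∑ j ∈ Finset.Icc 1 n, xRK i t j) + (∑ k ∈ Finset.Icc 1 m, xRF i t k) = 1)
    (htrack : ∀ j ∈ Finset.Icc 1 n,
      (∑ t ∈ Finset.Icc 1 H, ∑ i ∈ Finset.Icc 1 l, xRK i t j) = xKS j)
    (hfix : ∀ j ∈ Finset.Icc 1 m, ∀ t ∈ Finset.Icc 1 H,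
      (∑ i ∈ Finset.Icc 1 l, xRF i t j) = xFD j t)
    (hdemand : ∀ j ∈ Finset.Icc 1 m, ∀ τ ∈ Finset.Icc 1 q,
      (∑ k ∈ Finset.range T, xFD j (T * τ - k)) = 1 + xDS j τ) :
    ((Finset.Icc 1 n).filter (fun j => xKS j = 1)).card ≤ H * l - q * m := by
  set A := ∑ i ∈ Finset.Icc 1 l, ∑ t ∈ Finset.Icc 1 H, ∑ j ∈ Finset.Icc 1 n, xRK i t j with hA
  set B := ∑ i ∈ Finset.Icc 1 l, ∑ t ∈ Finset.Icc 1 H, ∑ k ∈ Finset.Icc 1 m, xRF i t k with hB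
  -- total supply
  have htot : A + B = H * l := by
    rw [hA, hB, ← Finset.sum_add_distrib]
    calc ∑ i ∈ Finset.Icc 1 l,
          ((∑ t ∈ Finset.Icc 1 H, ∑ j ∈ Finset.Icc 1 n, xRK i t j)
           + ∑ t ∈ Finset.Icc 1 H, ∑ k ∈ Finset.Icc 1 m, xRF i t k)
        = ∑ i ∈ Finset.Icc 1 l, ∑ t ∈ Finset.Icc 1 H, 1 := by
          apply Finset.sum_congr rfl
          intro i hi
          rw [← Finset.sum_add_distrib]
          exact Finset.sum_congr rfl (fun t ht => hsupply i hi t ht)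
      _ = H * l := by simp [Nat.card_Icc, mul_comm]
  -- A bounds the number of interrogated clusters
  have hAcard : ((Finset.Icc 1 n).filter (fun j => xKS j = 1)).card ≤ A := by
    have h1 : A = ∑ j ∈ Finset.Icc 1 n, xKS j := by
      rw [hA, Finset.sum_comm]
      exact (Finset.sum_congr rfl (fun t _ => Finset.sum_comm)).trans
        (Finset.sum_comm.trans (Finset.sum_congr rfl (fun j hj => htrack j hj)))
    rw [h1]
    calc ((Finset.Icc 1 n).filter (fun j => xKS j = 1)).card
        = ∑ j ∈ (Finset.Icc 1 n).filter (fun j => xKS j = 1), xKS j := by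
          rw [Finset.card_eq_sum_ones]
          exact Finset.sum_congr rfl (fun j hj => by
            simp only [Finset.mem_filter] at hj; omega)
      _ ≤ ∑ j ∈ Finset.Icc 1 n, xKS j :=
          Finset.sum_le_sum_of_subset (Finset.filter_subset _ _)
  -- B is at least q * m
  have hBge : q * m ≤ B := by
    have h1 : B = ∑ k ∈ Finset.Icc 1 m, ∑ t ∈ Finset.Icc 1 H, xFD k t := by
      rw [hB, Finset.sum_comm]
      exact (Finset.sum_congr rfl (fun t _ => Finset.sum_comm)).trans
        (Finset.sum_comm.trans (Finset.sum_congr rfl (fun k hk =>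
          Finset.sum_congr rfl (fun t ht => hfix k hk t ht))))
    rw [h1]
    have h2 : ∀ k ∈ Finset.Icc 1 m, q ≤ ∑ t ∈ Finset.Icc 1 H, xFD k t := by
      intro k hk
      rw [hH, ← windows_sum (xFD k) T q]
      calc q = ∑ τ ∈ Finset.Icc 1 q, 1 := by simp
        _ ≤ ∑ τ ∈ Finset.Icc 1 q, ∑ j ∈ Finset.range T, xFD k (T * τ - j) := by
            apply Finset.sum_le_sum
            intro τ hτ
            rw [hdemand k hk τ hτ]; omega
    calc q * m = ∑ k ∈ Finset.Icc 1 m, q := by simp [Nat.card_Icc, mul_comm]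
      _ ≤ ∑ k ∈ Finset.Icc 1 m, ∑ t ∈ Finset.Icc 1 H, xFD k t :=
          Finset.sum_le_sum h2
  omega
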